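/- For every integer m with 1 ≤ m ≤ n−1, the endomorphisms U_m and U_{m+1} of V satisfy the braid relation: U_m ∘ U_{m+1} ∘ U_m = U_{m+1} ∘ U_m ∘ U_{m+1}. (Together with the commutation relations U_r ∘ U_s = U_s ∘ U_r for |r − s| ≥ 2, this yields a representation of the braid group B_{n+1} by generalized permutation matrices.) -/

import Mathlib

open Finset

/-- The generalized permutation endomorphisms `U_m` (obtained from the categorical
action by setting `α = 0` in the identification system) satisfy the braid relation
`U_m ∘ U_{m+1} ∘ U_m = U_{m+1} ∘ U_m ∘ U_{m+1}` for `1 ≤ m ≤ n - 1`. -/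
theorem U_braid_relation {R : Type*} [CommRing R] (q t : Rˣ)
    {V : Type*} [AddCommGroup V] [Module R V]
    (n : ℕ) (hn : 2 ≤ n)
    (e : ℕ → ℕ → V)
    (b : Module.Basis {p : ℕ × ℕ // 1 ≤ p.1 ∧ p.1 < p.2 ∧ p.2 ≤ n + 1} R V)
    (hb : ∀ p : {p : ℕ × ℕ // 1 ≤ p.1 ∧ p.1 < p.2 ∧ p.2 ≤ n + 1}, b p = e p.1.1 p.1.2)
    (U : ℕ → Module.End R V)
    (hU : ∀ m, 1 ≤ m → m ≤ n → ∀ i j, 1 ≤ i → i < j → j ≤ n + 1 →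
      U m (e i j) =
        if i = m ∧ j = m + 1 then ((t * q⁻¹ * q⁻¹ : Rˣ) : R) • e m (m + 1)
        else if i = m ∧ m + 1 < j then e (m + 1) j
        else if i = m + 1 then ((t * q⁻¹ : Rˣ) : R) • e m j
        else if j = m then ((t * q⁻¹ : Rˣ) : R) • e i (m + 1)
        else if j = m + 1 then e i m
        else e i j)
    (m : ℕ) (hm1 : 1 ≤ m) (hmn : m + 1 ≤ n) :
    U m * U (m + 1) * U m = U (m + 1) * U m * U (m + 1) := by
  have h1 : ∀ k, 1 ≤ k → k ≤ n → U k (e k (k+1)) =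
      ((t * q⁻¹ * q⁻¹ : Rˣ) : R) • e k (k+1) := by
    intro k hk1 hk2
    rw [hU k hk1 hk2 k (k+1) (by omega) (by omega) (by omega), if_pos ⟨rfl, rfl⟩]
  have h2 : ∀ k j, 1 ≤ k → k ≤ n → k + 1 < j → j ≤ n + 1 → U k (e k j) = e (k+1) j := by
    intro k j hk1 hk2 hj1 hj2
    rw [hU k hk1 hk2 k j (by omega) (by omega) (by omega), if_neg (by omega),
      if_pos ⟨rfl, hj1⟩]
  have h3 : ∀ k j, 1 ≤ k → k ≤ n → k + 1 < j → j ≤ n + 1 →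
      U k (e (k+1) j) = ((t * q⁻¹ : Rˣ) : R) • e k j := by
    intro k j hk1 hk2 hj1 hj2
    rw [hU k hk1 hk2 (k+1) j (by omega) (by omega) (by omega), if_neg (by omega),
      if_neg (by omega), if_pos rfl]
  have h4 : ∀ k i, 1 ≤ k → k ≤ n → 1 ≤ i → i < k →
      U k (e i k) = ((t * q⁻¹ : Rˣ) : R) • e i (k+1) := by
    intro k i hk1 hk2 hi1 hi2
    rw [hU k hk1 hk2 i k (by omega) (by omega) (by omega), if_neg (by omega),
      if_neg (by omega), if_neg (by omega), if_pos rfl]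
  have h5 : ∀ k i, 1 ≤ k → k ≤ n → 1 ≤ i → i < k → U k (e i (k+1)) = e i k := by
    intro k i hk1 hk2 hi1 hi2
    rw [hU k hk1 hk2 i (k+1) (by omega) (by omega) (by omega), if_neg (by omega),
      if_neg (by omega), if_neg (by omega), if_neg (by omega), if_pos rfl]
  have h6 : ∀ k i j, 1 ≤ k → k ≤ n → 1 ≤ i → i < j → j ≤ n + 1 →
      i ≠ k → i ≠ k + 1 → j ≠ k → j ≠ k + 1 → U k (e i j) = e i j := by
    intro k i j hk1 hk2 hi1 hij hj2 n1 n2 n3 n4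
    rw [hU k hk1 hk2 i j (by omega) (by omega) (by omega), if_neg (by omega),
      if_neg (by omega), if_neg (by omega), if_neg (by omega), if_neg (by omega)]
  refine b.ext ?_
  rintro ⟨⟨i, j⟩, hi, hij, hj⟩
  rw [hb]
  simp only [Module.End.mul_apply]
  rcases (show i = m ∨ i = m + 1 ∨ i = m + 2 ∨ i < m ∨ m + 2 < i by omega) with
      hi' | hi' | hi' | hi' | hi' <;>
    rcases (show j = m ∨ j = m + 1 ∨ j = m + 2 ∨ j < m ∨ m + 2 < j by omega) with
      hj' | hj' | hj' | hj' | hj' <;>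
    (try subst hi') <;> (try subst hj') <;>
    first
      | omega
      | (simp (disch := omega) only [h1, h2, h3, h4, h5, h6, map_smul, smul_smul] <;>
          first
            | rfl
            | (congr 1; push_cast; ring))
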